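/- Let K be a closed max cone in ℝ≥0^n. Then K is generated by its set of extremals, and moreover every point of K is a max combination of at most n extremals of K. -/

import Mathlib

open scoped NNReal

/-- The max-algebraic span of `S`: all vectors `⨆_{x ∈ S} λ_x • x` where only
finitely many coefficients `λ_x` are nonzero (`MaxSpan ∅ = {0}`). -/
def MaxSpan {n : ℕ} (S : Set (Fin n → ℝ≥0)) : Set (Fin n → ℝ≥0) :=
  {u | ∃ (F : Finset (Fin n → ℝ≥0)) (lam : (Fin n → ℝ≥0) → ℝ≥0),
    ↑F ⊆ S ∧ u = F.sup (fun x => lam x • x)}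

/-- A max cone: a subset of `ℝ≥0ⁿ` closed under pointwise max `⊔` and under
multiplication by nonnegative scalars. -/
def MaxCone {n : ℕ} (K : Set (Fin n → ℝ≥0)) : Prop :=
  0 ∈ K ∧ (∀ x ∈ K, ∀ y ∈ K, x ⊔ y ∈ K) ∧ (∀ (c : ℝ≥0), ∀ x ∈ K, c • x ∈ K)

/-- `u` is an extremal in `K` if `u = v ⊔ w` with `v, w ∈ K` implies `u = v` or `u = w`. -/
def IsExtremal {n : ℕ} (K : Set (Fin n → ℝ≥0)) (u : Fin n → ℝ≥0) : Prop :=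
  u ∈ K ∧ ∀ v ∈ K, ∀ w ∈ K, u = v ⊔ w → u = v ∨ u = w

/-- A vector is scaled if its max norm `⨆ i, x i` equals `1`. -/
def Scaled {n : ℕ} (x : Fin n → ℝ≥0) : Prop := (⨆ i, x i) = 1

/-- The support of a vector. -/
def supp {n : ℕ} (v : Fin n → ℝ≥0) : Set (Fin n) := {j | 0 < v j}

/-- For `j ∈ supp u`, `rescale u j = (1 / u j) • u`, the `j`-scaling `u(j)`. -/
noncomputable def rescale {n : ℕ} (u : Fin n → ℝ≥0) (j : Fin n) : Fin n → ℝ≥0 :=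
  (u j)⁻¹ • u

/-- `T(j) = {u(j) : u ∈ T, j ∈ supp u}`. -/
noncomputable def setScale {n : ℕ} (T : Set (Fin n → ℝ≥0)) (j : Fin n) :
    Set (Fin n → ℝ≥0) :=
  {y | ∃ u ∈ T, j ∈ supp u ∧ y = rescale u j}

/-- `u` is minimal in `T` if `v ∈ T` and `v ≤ u` imply `v = u`. -/
def MinimalIn {n : ℕ} (T : Set (Fin n → ℝ≥0)) (u : Fin n → ℝ≥0) : Prop :=
  u ∈ T ∧ ∀ v ∈ T, v ≤ u → v = u

/-- A set is totally dependent if each of its elements is a max combination of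
the remaining ones. -/
def TotallyDependent {n : ℕ} (S : Set (Fin n → ℝ≥0)) : Prop :=
  ∀ x ∈ S, x ∈ MaxSpan (S \ {x})

/-- A set is independent if none of its elements is a max combination of
the remaining ones. -/
def IndependentSet {n : ℕ} (S : Set (Fin n → ℝ≥0)) : Prop :=
  ∀ x ∈ S, x ∉ MaxSpan (S \ {x})

/-- A basis for `K` is an independent set of generators for `K`. -/
def IsBasis {n : ℕ} (S K : Set (Fin n → ℝ≥0)) : Prop :=
  IndependentSet S ∧ MaxSpan S = K


lemma exists_extremal_le {n : ℕ} {K : Set (Fin n → ℝ≥0)} (hK : MaxCone K)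
    (hcl : IsClosed K) {u : Fin n → ℝ≥0} (hu : u ∈ K) (j : Fin n) :
    ∃ v, IsExtremal K v ∧ v ≤ u ∧ v j = u j := by
  set T : Set (Fin n → ℝ≥0) := {v | v ∈ K ∧ v ≤ u ∧ v j = u j} with hT
  have hTc : IsClosed T := by
    have h1 : T = K ∩ Set.Iic u ∩ ((fun v : Fin n → ℝ≥0 => v j) ⁻¹' {u j}) := by
      ext v; simp only [hT, Set.mem_setOf_eq, Set.mem_inter_iff, Set.mem_Iic,
        Set.mem_preimage, Set.mem_singleton_iff]; tauto
    rw [h1]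
    exact ((hcl.inter isClosed_Iic).inter
      (isClosed_singleton.preimage (continuous_apply j)))
  have hTcomp : IsCompact T := by
    refine (isCompact_Icc (a := (0 : Fin n → ℝ≥0)) (b := u)).of_isClosed_subset hTc ?_
    intro v hv
    exact ⟨fun i => zero_le, hv.2.1⟩
  have hTne : T.Nonempty := ⟨u, hu, le_rfl, rfl⟩
  have hfc : Continuous (fun v : Fin n → ℝ≥0 => ∑ i, v i) :=
    continuous_finset_sum _ (fun i _ => continuous_apply i)
  obtain ⟨v, hvT, hvmin⟩ := hTcomp.exists_isMinOn hTne hfc.continuousOn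
  have hmin : ∀ w ∈ T, w ≤ v → w = v := by
    intro w hwT hwv
    have h1 : ∑ i, v i ≤ ∑ i, w i := hvmin hwT
    have h2 : ∀ i ∈ Finset.univ, w i ≤ v i := fun i _ => hwv i
    have h3 : ∑ i, w i = ∑ i, v i :=
      le_antisymm (Finset.sum_le_sum h2) h1
    funext i
    exact (Finset.sum_eq_sum_iff_of_le h2).mp h3 i (Finset.mem_univ i)
  refine ⟨v, ⟨hvT.1, ?_⟩, hvT.2.1, hvT.2.2⟩
  intro a ha b hb hvab
  have hav : a ≤ v := hvab ▸ le_sup_left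
  have hbv : b ≤ v := hvab ▸ le_sup_right
  have hj : a j ⊔ b j = u j := by
    have := congrFun hvab j
    simp only [Pi.sup_apply] at this
    rw [← this, hvT.2.2]
  rcases le_total (a j) (b j) with h | h
  · right
    have : b ∈ T := ⟨hb, hbv.trans hvT.2.1, by rw [← hj, sup_eq_right.mpr h]⟩
    exact (hmin b this hbv).symm
  · left
    have : a ∈ T := ⟨ha, hav.trans hvT.2.1, by rw [← hj, sup_eq_left.mpr h]⟩
    exact (hmin a this hav).symm

lemma mem_span_extremals {n : ℕ} {K : Set (Fin n → ℝ≥0)} (hK : MaxCone K)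
    (hcl : IsClosed K) {u : Fin n → ℝ≥0} (hu : u ∈ K) :
    ∃ F : Finset (Fin n → ℝ≥0), ↑F ⊆ {x | IsExtremal K x} ∧ F.card ≤ n ∧
      u = F.sup id := by
  choose v hv1 hv2 hv3 using fun j => exists_extremal_le hK hcl hu j
  refine ⟨Finset.image v Finset.univ, ?_, ?_, ?_⟩
  · intro x hx
    simp only [Finset.coe_image, Set.mem_image] at hx
    obtain ⟨j, -, rfl⟩ := hx
    exact hv1 j
  · exact (Finset.card_image_le).trans (by simp)
  · refine le_antisymm ?_ ?_
    · intro i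
      have h1 : ((Finset.image v Finset.univ).sup id) i
          = (Finset.image v Finset.univ).sup (fun x => x i) := by
        rw [Finset.sup_apply]; rfl
      rw [h1]
      calc u i = v i i := (hv3 i).symm
        _ ≤ _ := Finset.le_sup (f := fun x => x i)
              (Finset.mem_image_of_mem v (Finset.mem_univ i))
    · refine Finset.sup_le ?_
      intro x hx
      simp only [Finset.mem_image] at hx
      obtain ⟨j, -, rfl⟩ := hx
      exact hv2 j

set_option synthInstance.maxHeartbeats 1000000 in
/-- a closed max cone `K` is generated by its extremals, and every
point of `K` is a max combination of at most `n` extremals. -/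
theorem stmt13 {n : ℕ} (K : Set (Fin n → ℝ≥0)) (hK : MaxCone K)
    (hcl : IsClosed K) :
    MaxSpan {x | IsExtremal K x} = K ∧
    ∀ u ∈ K, ∃ F : Finset (Fin n → ℝ≥0),
      ↑F ⊆ {x | IsExtremal K x} ∧ F.card ≤ n ∧ u ∈ MaxSpan ↑F := by
  have key : ∀ u ∈ K, ∃ F : Finset (Fin n → ℝ≥0),
      ↑F ⊆ {x | IsExtremal K x} ∧ F.card ≤ n ∧ u ∈ MaxSpan ↑F := by
    intro u hu
    obtain ⟨F, hF1, hF2, hF3⟩ := mem_span_extremals hK hcl hu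
    refine ⟨F, hF1, hF2, F, fun _ => 1, subset_rfl, ?_⟩
    rw [hF3]
    exact Finset.sup_congr rfl (fun x _ => (one_smul ℝ≥0 x).symm)
  refine ⟨?_, key⟩
  apply Set.eq_of_subset_of_subset
  · rintro u ⟨F, lam, hF, rfl⟩
    induction F using Finset.induction with
    | empty =>
      exact hK.1
    | @insert a s hx ih =>
      rw [Finset.sup_insert]
      refine hK.2.1 _ ?_ _ (ih (fun y hy => hF (Finset.mem_insert_of_mem hy)))
      exact hK.2.2 _ _ (hF (Finset.mem_insert_self a s)).1
  · intro u hu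
    obtain ⟨F, hF1, -, F', lam, hF', rfl⟩ := key u hu
    exact ⟨F', lam, hF'.trans hF1, rfl⟩
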